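/- Let v_{i-1}, v_i, v_{i+1} be real numbers with b = v_{i+1} - v_i ≠ 0 and r = (v_i - v_{i-1})/b, and suppose r > 1. Then for every β with 0 ≤ β ≤ 1/(r - 1), the value P(β) = β·(3v_i - v_{i-1})/2 + (1-β)·(v_i + v_{i+1})/2 satisfies min(v_{i-1}, v_i, v_{i+1}) ≤ P(β) ≤ max(v_{i-1}, v_i, v_{i+1}). -/
import Mathlib


theorem stmt_17 (vm v vp : ℝ) (hb : vp - v ≠ 0)
    (r : ℝ) (hr : r = (v - vm) / (vp - v)) (hr1 : 1 < r)
    (β : ℝ) (h0 : 0 ≤ β) (h1 : β ≤ 1 / (r - 1)) :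
    min (min vm v) vp ≤ β * (3 * v - vm) / 2 + (1 - β) * (v + vp) / 2 ∧
      β * (3 * v - vm) / 2 + (1 - β) * (v + vp) / 2 ≤ max (max vm v) vp := by
  have hrm : v - vm = r * (vp - v) := by
    field_simp at hr; linarith
  have hβ1 : β * (r - 1) ≤ 1 := by
    have := (le_div_iff₀ (by linarith : (0:ℝ) < r - 1)).mp h1
    linarith
  rcases lt_or_gt_of_ne hb with h | h
  · constructor
    · refine le_trans (min_le_right _ _) ?_
      nlinarith [mul_nonneg h0 (by linarith : (0:ℝ) ≤ r - 1)]
    · refine le_trans ?_ (le_trans (le_max_left vm v) (le_max_left _ _))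
      nlinarith [mul_nonneg h0 (by linarith : (0:ℝ) ≤ r - 1)]
  · constructor
    · refine le_trans (le_trans (min_le_left _ _) (min_le_left _ _)) ?_
      nlinarith [mul_nonneg h0 (by linarith : (0:ℝ) ≤ r - 1)]
    · refine le_trans ?_ (le_max_right _ _)
      nlinarith [mul_nonneg h0 (by linarith : (0:ℝ) ≤ r - 1)]
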